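/- For every n ≥ 1, in MvPolynomial (Fin n) (ZMod 2) the element (Q_0 ∘ Q_1 ∘ ⋯ ∘ Q_{n-2}) (∏_{j : Fin n} X j) is nonzero, where the composite has n − 1 factors (and is the identity when n = 1). (This is the nonvanishing of the element ω = Q₀⋯Q_{n−2} ι_n used in the paper's Lemma 2.) -/

import Mathlib

open MvPolynomial

/-- The `i`-th Milnor derivation `Q_i` on `𝔽₂[x_j : j ∈ σ]`: the unique
`𝔽₂`-linear derivation with `Q_i (X j) = (X j) ^ (2 ^ (i + 1))`. -/
noncomputable def Q (σ : Type*) (i : ℕ) :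
    MvPolynomial σ (ZMod 2) →ₗ[ZMod 2] MvPolynomial σ (ZMod 2) :=
  (MvPolynomial.mkDerivation (ZMod 2)
    fun j => (MvPolynomial.X j : MvPolynomial σ (ZMod 2)) ^ (2 ^ (i + 1))).toLinearMap

namespace MilnorAux

/-- Product rule for derivations over a `Finset`. -/
lemma deriv_prod {R A : Type*} [CommRing R] [CommRing A] [Algebra R A]
    (D : Derivation R A A) {ι : Type*} [DecidableEq ι] (t : Finset ι) (f : ι → A) :
    D (∏ i ∈ t, f i) = ∑ i ∈ t, (∏ k ∈ t.erase i, f k) * D (f i) := by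
  induction t using Finset.induction with
  | empty => simp
  | @insert a t ha ih =>
    rw [Finset.prod_insert ha, Derivation.leibniz, ih, Finset.sum_insert ha,
      Finset.erase_insert ha, smul_eq_mul, smul_eq_mul, Finset.mul_sum]
    rw [add_comm, mul_comm]
    congr 1
    refine Finset.sum_congr rfl fun i hi => ?_
    have hia : i ≠ a := fun h => ha (h ▸ hi)
    rw [Finset.erase_insert_of_ne hia.symm, Finset.prod_insert (fun h => ha (Finset.mem_of_mem_erase h)),
      mul_assoc]

lemma even_smul_eq_zero {σ : Type*} {m : ℕ} (hm : Even m)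
    (x : MvPolynomial σ (ZMod 2)) : m • x = 0 := by
  rw [← Nat.cast_smul_eq_nsmul (ZMod 2) m x]
  have : (m : ZMod 2) = 0 := by
    rw [ZMod.natCast_eq_zero_iff]
    exact hm.two_dvd
  rw [this, zero_smul]

lemma even_two_pow_succ (a : ℕ) : Even (2 ^ (a + 1)) := by
  exact ⟨2 ^ a, by ring⟩

/-- Key computation: `Q a` applied to a product of powers whose exponents are `1` on `s`
and even off `s`. -/
lemma Q_prod_pow {n : ℕ} (a : ℕ) (s : Finset (Fin n)) (e : Fin n → ℕ)
    (h1 : ∀ j ∈ s, e j = 1) (h2 : ∀ j ∉ s, Even (e j)) :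
    Q (Fin n) a (∏ j, X j ^ e j) =
      ∑ j ∈ s, ∏ k, (X k : MvPolynomial (Fin n) (ZMod 2)) ^
        (Function.update e j (2 ^ (a + 1)) k) := by
  have hD : Q (Fin n) a (∏ j, X j ^ e j)
      = ∑ j : Fin n, (∏ k ∈ Finset.univ.erase j, (X k : MvPolynomial (Fin n) (ZMod 2)) ^ e k)
          * ((mkDerivation (ZMod 2)
              fun j => (X j : MvPolynomial (Fin n) (ZMod 2)) ^ (2 ^ (a + 1))) (X j ^ e j)) := by
    exact deriv_prod _ Finset.univ _
  rw [hD]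
  rw [← Finset.sum_subset (Finset.subset_univ s)]
  · refine Finset.sum_congr rfl fun j hj => ?_
    rw [Derivation.leibniz_pow, mkDerivation_X, h1 j hj]
    simp only [Nat.sub_self, pow_zero, one_smul, smul_eq_mul, one_mul]
    rw [← Finset.prod_erase_mul Finset.univ _ (Finset.mem_univ j), Function.update_self]
    congr 1
    refine Finset.prod_congr rfl fun k hk => ?_
    rw [Function.update_of_ne (Finset.ne_of_mem_erase hk)]
  · intro j _ hj
    rw [Derivation.leibniz_pow, mkDerivation_X, even_smul_eq_zero (h2 j hj), mul_zero]

lemma Q_comm (σ : Type*) (a b : ℕ) : Q σ a ∘ₗ Q σ b = Q σ b ∘ₗ Q σ a := by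
  set D1 : Derivation (ZMod 2) (MvPolynomial σ (ZMod 2)) (MvPolynomial σ (ZMod 2)) :=
    mkDerivation (ZMod 2) fun j => (X j : MvPolynomial σ (ZMod 2)) ^ (2 ^ (a + 1))
  set D2 : Derivation (ZMod 2) (MvPolynomial σ (ZMod 2)) (MvPolynomial σ (ZMod 2)) :=
    mkDerivation (ZMod 2) fun j => (X j : MvPolynomial σ (ZMod 2)) ^ (2 ^ (b + 1))
  have h : ⁅D1, D2⁆ = 0 := by
    apply derivation_ext
    intro i
    rw [Derivation.commutator_apply]
    have e1 : D1 (D2 (X i)) = 0 := by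
      rw [mkDerivation_X, Derivation.leibniz_pow, even_smul_eq_zero (even_two_pow_succ b)]
    have e2 : D2 (D1 (X i)) = 0 := by
      rw [mkDerivation_X, Derivation.leibniz_pow, even_smul_eq_zero (even_two_pow_succ a)]
    simp [e1, e2]
  refine LinearMap.ext fun p => ?_
  have := congrArg
    (fun D : Derivation (ZMod 2) (MvPolynomial σ (ZMod 2)) (MvPolynomial σ (ZMod 2)) => D p) h
  simpa [Derivation.commutator_apply, sub_eq_zero, Q] using this

/-- The composite of the `Q`'s along a list of indices. -/
noncomputable def F (σ : Type*) (l : List ℕ) :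
    MvPolynomial σ (ZMod 2) →ₗ[ZMod 2] MvPolynomial σ (ZMod 2) :=
  (l.map (Q σ)).foldr (· ∘ₗ ·) LinearMap.id

@[simp] lemma F_nil (σ : Type*) : F σ [] = LinearMap.id := rfl

@[simp] lemma F_cons (σ : Type*) (a : ℕ) (l : List ℕ) :
    F σ (a :: l) = Q σ a ∘ₗ F σ l := rfl

lemma Q_F_comm (σ : Type*) (a : ℕ) (l : List ℕ) :
    Q σ a ∘ₗ F σ l = F σ l ∘ₗ Q σ a := by
  induction l with
  | nil => rfl
  | cons b l ih =>
    rw [F_cons, ← LinearMap.comp_assoc, Q_comm σ a b, LinearMap.comp_assoc, ih,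
      ← LinearMap.comp_assoc]

/-- Main induction: nonvanishing together with control of supports. -/
lemma main {n : ℕ} (l : List ℕ) (hl : l.Nodup) :
    ∀ (s : Finset (Fin n)) (e : Fin n → ℕ),
      l.length ≤ s.card → (∀ j ∈ s, e j = 1) → (∀ j, j ∉ s → Even (e j)) →
      F (Fin n) l (∏ j, X j ^ e j) ≠ 0 ∧
        ∀ m ∈ (F (Fin n) l (∏ j, X j ^ e j)).support,
          (∀ j, j ∉ s → m j = e j) ∧ (∀ j ∈ s, m j = 1 ∨ ∃ b ∈ l, m j = 2 ^ (b + 1)) := by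
  induction l with
  | nil =>
    intro s e _ h1 _
    have hmon : (∏ j, (X j : MvPolynomial (Fin n) (ZMod 2)) ^ e j)
        = monomial (Finsupp.equivFunOnFinite.symm e) 1 := by
      rw [← prod_X_pow_eq_monomial]
      exact (Finset.prod_subset (Finset.subset_univ _) (fun x _ hx => by
        have h0 : e x = 0 := by
          have := Finsupp.notMem_support_iff.mp hx
          simpa using this
        rw [h0, pow_zero])).symm
    simp only [F_nil, LinearMap.id_apply, hmon]
    constructor
    · intro h
      exact (one_ne_zero : (1 : ZMod 2) ≠ 0) (monomial_eq_zero.mp h)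
    · intro m hm
      rw [support_monomial, if_neg (one_ne_zero : (1 : ZMod 2) ≠ 0)] at hm
      rw [Finset.mem_singleton] at hm
      subst hm
      refine ⟨fun j _ => rfl, fun j hj => ?_⟩
      left
      exact h1 j hj
  | cons a l ih =>
    intro s e hcard h1 h2
    have ha : a ∉ l := (List.nodup_cons.mp hl).1
    have hl' : l.Nodup := (List.nodup_cons.mp hl).2
    -- rewrite using commutation
    have hF : F (Fin n) (a :: l) (∏ j, X j ^ e j)
        = ∑ j ∈ s, F (Fin n) l (∏ k, X k ^ (Function.update e j (2 ^ (a + 1)) k)) := by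
      rw [F_cons, LinearMap.comp_apply, ← LinearMap.comp_apply (Q (Fin n) a),
        Q_F_comm, LinearMap.comp_apply, Q_prod_pow a s e h1 h2, map_sum]
    set T : Fin n → MvPolynomial (Fin n) (ZMod 2) :=
      fun j => F (Fin n) l (∏ k, X k ^ (Function.update e j (2 ^ (a + 1)) k)) with hT
    -- IH specialized
    have hIH : ∀ j ∈ s, T j ≠ 0 ∧
        ∀ m ∈ (T j).support,
          (∀ k, k ∉ s.erase j → m k = Function.update e j (2 ^ (a + 1)) k) ∧
          (∀ k ∈ s.erase j, m k = 1 ∨ ∃ b ∈ l, m k = 2 ^ (b + 1)) := by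
      intro j hj
      refine ih hl' (s.erase j) (Function.update e j (2 ^ (a + 1))) ?_ ?_ ?_
      · rw [Finset.card_erase_of_mem hj]
        have := hcard
        simp only [List.length_cons] at this
        omega
      · intro k hk
        rw [Function.update_of_ne (Finset.ne_of_mem_erase hk)]
        exact h1 k (Finset.mem_of_mem_erase hk)
      · intro k hk
        by_cases hkj : k = j
        · subst hkj
          rw [Function.update_self]
          exact even_two_pow_succ a
        · rw [Function.update_of_ne hkj]
          refine h2 k fun hks => hk (Finset.mem_erase.mpr ⟨hkj, hks⟩)
    -- support facts for the sum
    have hsupp : ∀ m ∈ (∑ j ∈ s, T j).support, ∃ j ∈ s, m ∈ (T j).support := by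
      intro m hm
      rw [mem_support_iff] at hm
      rw [coeff_sum] at hm
      obtain ⟨j, hj, hne⟩ := Finset.exists_ne_zero_of_sum_ne_zero hm
      exact ⟨j, hj, mem_support_iff.mpr hne⟩
    have hsne : s.Nonempty := by
      rw [← Finset.card_pos]
      have := hcard
      simp only [List.length_cons] at this
      omega
    obtain ⟨j0, hj0⟩ := hsne
    obtain ⟨hT0ne, hT0supp⟩ := hIH j0 hj0
    obtain ⟨m0, hm0⟩ := support_nonempty.mpr hT0ne
    have hm0j0 : m0 j0 = 2 ^ (a + 1) := by
      have := (hT0supp m0 hm0).1 j0 (Finset.notMem_erase j0 s)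
      rwa [Function.update_self] at this
    have hdisj : ∀ j ∈ s, j ≠ j0 → m0 ∉ (T j).support := by
      intro j hj hjne hmem
      have hj0mem : j0 ∈ s.erase j := Finset.mem_erase.mpr ⟨fun h => hjne h.symm, hj0⟩
      rcases (hIH j hj).2 m0 hmem |>.2 j0 hj0mem with h | ⟨b, hb, hbe⟩
      · rw [hm0j0] at h
        have : (2 : ℕ) ≤ 2 ^ (a + 1) := Nat.one_lt_two_pow (by omega)
        omega
      · rw [hm0j0] at hbe
        have : b = a := by
          have := Nat.pow_right_injective (le_refl 2) hbe.symm
          omega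
        exact ha (this ▸ hb)
    have hcoeff : coeff m0 (∑ j ∈ s, T j) = coeff m0 (T j0) := by
      rw [coeff_sum]
      refine Finset.sum_eq_single_of_mem j0 hj0 fun j hj hjne => ?_
      by_contra h
      exact hdisj j hj hjne (mem_support_iff.mpr h)
    constructor
    · rw [hF]
      intro h
      rw [h] at hcoeff
      have : coeff m0 (T j0) ≠ 0 := mem_support_iff.mp hm0
      simp [coeff_zero] at hcoeff
      exact this hcoeff.symm
    · rw [hF]
      intro m hm
      obtain ⟨j, hj, hmj⟩ := hsupp m hm
      obtain ⟨-, hsp⟩ := hIH j hj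
      obtain ⟨hout, hin⟩ := hsp m hmj
      constructor
      · intro k hk
        have hkj : k ≠ j := fun h => hk (h ▸ hj)
        have : k ∉ s.erase j := fun h => hk (Finset.mem_of_mem_erase h)
        rw [hout k this, Function.update_of_ne hkj]
      · intro k hk
        by_cases hkj : k = j
        · subst hkj
          right
          refine ⟨a, List.mem_cons_self, ?_⟩
          have := hout k (Finset.notMem_erase k s)
          rwa [Function.update_self] at this
        · rcases hin k (Finset.mem_erase.mpr ⟨hkj, hk⟩) with h | ⟨b, hb, hbe⟩
          · exact Or.inl h
          · exact Or.inr ⟨b, List.mem_cons_of_mem a hb, hbe⟩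

end MilnorAux

/-- The element `ω = Q₀⋯Q_{n-2} (x₁⋯x_n)` is nonzero. -/
theorem milnor_composite_prod_ne_zero (n : ℕ) (hn : 1 ≤ n) :
    ((List.ofFn fun k : Fin (n - 1) => Q (Fin n) (k : ℕ)).foldr (· ∘ₗ ·) LinearMap.id)
        (∏ j : Fin n, X j) ≠ 0 := by
  classical
  set l : List ℕ := List.ofFn (fun k : Fin (n - 1) => (k : ℕ)) with hldef
  have hlist : (List.ofFn fun k : Fin (n - 1) => Q (Fin n) (k : ℕ)) = l.map (Q (Fin n)) := by
    rw [hldef, List.map_ofFn]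
    rfl
  have hnodup : l.Nodup := List.nodup_ofFn.mpr (fun i j h => Fin.val_injective h)
  have hlen : l.length = n - 1 := by simp [hldef]
  have hprod : (∏ j : Fin n, (X j : MvPolynomial (Fin n) (ZMod 2)))
      = ∏ j : Fin n, X j ^ (fun _ : Fin n => 1) j := by simp
  rw [hlist, hprod]
  have := (MilnorAux.main (n := n) l hnodup Finset.univ (fun _ => 1)
    (by rw [hlen, Finset.card_univ, Fintype.card_fin]; omega)
    (fun j _ => rfl) (fun j hj => absurd (Finset.mem_univ j) hj)).1
  exact this
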